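/- Let n ≥ 1 be an integer, p ∈ (0,1), Sp ∈ [0,1], and s_1,…,s_n ∈ [0,1]. Consider the probability model in which X_1,…,X_n are independent Bernoulli(p) random variables and, conditionally on S = X_1+⋯+X_n, the pool test outcome T ∈ {0,1} satisfies P(T = 1 | S = k) = s_k for 1 ≤ k ≤ n and P(T = 1 | S = 0) = 1-Sp. If P(T=1) > 0, then the posterior probability that a given subject is positive after a positive pool test is P(X_1 = 1 | T = 1) = p·Σ_{k=1}^n s_k·Pr(k-1;n-1,p) / [ Σ_{k=1}^n s_k·Pr(k;n,p) + (1-Sp)·(1-p)^n ]. -/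
import Mathlib


/-- `Pr k n p = C(n,k) p^k (1-p)^(n-k)`: binomial probability. -/
noncomputable def Pr (k n : ℕ) (p : ℝ) : ℝ :=
  (n.choose k : ℝ) * p ^ k * (1 - p) ^ (n - k)

/-- Equivalence between boolean vectors and finsets. -/
def boolEquivFinset (n : ℕ) : (Fin n → Bool) ≃ Finset (Fin n) where
  toFun ω := Finset.univ.filter fun i => ω i = true
  invFun A := fun i => decide (i ∈ A)
  left_inv ω := by funext i; by_cases h : ω i = true <;> simp [h]
  right_inv A := by ext i; simp

lemma prod_ite_mem_card {n : ℕ} (p : ℝ) (A : Finset (Fin n)) :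
    (∏ i, if i ∈ A then p else 1 - p) = p ^ A.card * (1 - p) ^ (n - A.card) := by
  rw [Finset.prod_ite, Finset.prod_const, Finset.prod_const]
  have hA : (Finset.univ.filter fun i => i ∈ A).card = A.card := by
    simp [Finset.filter_mem_eq_inter]
  have h2 : (Finset.filter (fun x => x ∉ A) Finset.univ).card = n - A.card := by
    rw [Finset.filter_not, Finset.card_sdiff_of_subset (Finset.filter_subset _ _), hA,
      Finset.card_univ, Fintype.card_fin]
  rw [hA, h2]

lemma sum_card_powerset {α : Type*} [DecidableEq α] (t : Finset α) (f : ℕ → ℝ) :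
    ∑ A ∈ t.powerset, f A.card
      = ∑ k ∈ Finset.range (t.card + 1), (t.card.choose k : ℝ) * f k := by
  rw [Finset.sum_powerset]
  exact Finset.sum_congr rfl fun k _ => by
    rw [Finset.sum_powersetCard, nsmul_eq_mul]

/-- Model: `X_1, …, X_n` independent Bernoulli(p) on `Fin n → Bool` with product
weight `w`, `S` the number of positives, and conditionally on `S` the pool test
is positive with probability `q (S ω)`, where `q k = s k` for `k ≥ 1` and
`q 0 = 1 - Sp`.  If `P(T=1) > 0`, the posterior probability that a designated
subject is positive given a positive pool test is
`p·Σ_{k=1}^n s_k·Pr(k-1;n-1,p) / [Σ_{k=1}^n s_k·Pr(k;n,p) + (1-Sp)·(1-p)^n]`. -/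
theorem posterior_positive_given_positive_pool_test (n : ℕ) (hn : 1 ≤ n)
    (p Sp : ℝ) (hp0 : 0 < p) (hp1 : p < 1) (hSp : Sp ∈ Set.Icc (0 : ℝ) 1)
    (s : ℕ → ℝ) (hs : ∀ k ∈ Finset.Icc 1 n, s k ∈ Set.Icc (0 : ℝ) 1)
    (S : (Fin n → Bool) → ℕ)
    (hS : S = fun ω => (Finset.univ.filter fun i => ω i = true).card)
    (q : ℕ → ℝ) (hq : q = fun k => if k = 0 then 1 - Sp else s k)
    (w : (Fin n → Bool) → ℝ)
    (hw : w = fun ω => ∏ i, (if ω i then p else 1 - p))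
    (hT1 : 0 < ∑ ω : Fin n → Bool, w ω * q (S ω)) :
    (∑ ω ∈ Finset.univ.filter (fun ω : Fin n → Bool => ω ⟨0, by omega⟩ = true),
        w ω * q (S ω)) /
      (∑ ω : Fin n → Bool, w ω * q (S ω))
    = p * (∑ k ∈ Finset.Icc 1 n, s k * Pr (k - 1) (n - 1) p)
        / ((∑ k ∈ Finset.Icc 1 n, s k * Pr k n p) + (1 - Sp) * (1 - p) ^ n) := by
  subst hS hq hw
  set i0 : Fin n := ⟨0, by omega⟩ with hi0
  -- the value as a function of the finset of positives
  set F : ℕ → ℝ := fun k => p ^ k * (1 - p) ^ (n - k) *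
    (if k = 0 then 1 - Sp else s k) with hF
  have key : ∀ ω : Fin n → Bool,
      (∏ i, if ω i then p else 1 - p) *
        (if (Finset.univ.filter fun i => ω i = true).card = 0 then 1 - Sp
          else s (Finset.univ.filter fun i => ω i = true).card)
      = F (boolEquivFinset n ω).card := by
    intro ω
    have : (boolEquivFinset n ω) = Finset.univ.filter fun i => ω i = true := rfl
    rw [hF, this]
    congr 1
    rw [← prod_ite_mem_card p (Finset.univ.filter fun i => ω i = true)]
    exact Finset.prod_congr rfl fun i _ => by by_cases h : ω i = true <;> simp [h]
  -- denominator
  have hden : (∑ ω : Fin n → Bool, (∏ i, if ω i then p else 1 - p) *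
        (if (Finset.univ.filter fun i => ω i = true).card = 0 then 1 - Sp
          else s (Finset.univ.filter fun i => ω i = true).card))
      = (∑ k ∈ Finset.Icc 1 n, s k * Pr k n p) + (1 - Sp) * (1 - p) ^ n := by
    rw [Fintype.sum_equiv (boolEquivFinset n) _ (fun A => F A.card) key]
    rw [← Finset.powerset_univ, sum_card_powerset]
    rw [Finset.card_univ, Fintype.card_fin, Finset.sum_range_succ']
    congr 1
    · have : Finset.Icc 1 n = Finset.Ico 1 (n + 1) := by
        rw [Finset.Ico_add_one_right_eq_Icc]
      rw [this, Finset.sum_Ico_eq_sum_range]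
      simp only [Nat.add_sub_cancel]
      refine Finset.sum_congr rfl fun j _ => ?_
      rw [hF]
      have h1 : 1 + j = j + 1 := by omega
      rw [h1]
      simp only [if_neg (Nat.succ_ne_zero j)]
      rw [Pr]
      ring
    · rw [hF]
      norm_num
      ring
  -- numerator
  have hnum : (∑ ω ∈ Finset.univ.filter (fun ω : Fin n → Bool => ω i0 = true),
        (∏ i, if ω i then p else 1 - p) *
        (if (Finset.univ.filter fun i => ω i = true).card = 0 then 1 - Sp
          else s (Finset.univ.filter fun i => ω i = true).card))
      = p * ∑ k ∈ Finset.Icc 1 n, s k * Pr (k - 1) (n - 1) p := by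
    -- first transfer to finsets containing i0
    have step1 : (∑ ω ∈ Finset.univ.filter (fun ω : Fin n → Bool => ω i0 = true),
          (∏ i, if ω i then p else 1 - p) *
          (if (Finset.univ.filter fun i => ω i = true).card = 0 then 1 - Sp
            else s (Finset.univ.filter fun i => ω i = true).card))
        = ∑ A ∈ Finset.univ.filter (fun A : Finset (Fin n) => i0 ∈ A), F A.card := by
      refine Finset.sum_nbij' (i := fun ω => boolEquivFinset n ω)
        (j := fun A => (boolEquivFinset n).symm A) ?_ ?_ ?_ ?_ ?_
      · intro ω hω
        simp only [Finset.mem_filter, Finset.mem_univ, true_and] at hω ⊢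
        simp [boolEquivFinset, hω]
      · intro A hA
        simp only [Finset.mem_filter, Finset.mem_univ, true_and] at hA ⊢
        simp [boolEquivFinset, hA]
      · intro ω _; exact (boolEquivFinset n).left_inv ω
      · intro A _; exact (boolEquivFinset n).right_inv A
      · intro ω _; exact key ω
    rw [step1]
    -- now bijection with subsets of univ.erase i0
    have step2 : (∑ A ∈ Finset.univ.filter (fun A : Finset (Fin n) => i0 ∈ A), F A.card)
        = ∑ B ∈ (Finset.univ.erase i0).powerset, F (B.card + 1) := by
      refine Finset.sum_nbij' (i := fun A => A.erase i0) (j := fun B => insert i0 B)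
        ?_ ?_ ?_ ?_ ?_
      · intro A hA
        simp only [Finset.mem_filter, Finset.mem_univ, true_and] at hA
        rw [Finset.mem_powerset]
        intro x hx
        simp only [Finset.mem_erase] at hx ⊢
        exact ⟨hx.1, Finset.mem_univ x⟩
      · intro B hB
        simp [Finset.mem_insert]
      · intro A hA
        simp only [Finset.mem_filter, Finset.mem_univ, true_and] at hA
        exact Finset.insert_erase hA
      · intro B hB
        rw [Finset.mem_powerset] at hB
        have : i0 ∉ B := fun h => by
          have := hB h; simp at this
        exact Finset.erase_insert this
      · intro A hA
        simp only [Finset.mem_filter, Finset.mem_univ, true_and] at hA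
        congr 1
        rw [Finset.card_erase_of_mem hA]
        have : 0 < A.card := Finset.card_pos.mpr ⟨i0, hA⟩
        omega
    rw [step2,
      show (∑ B ∈ (Finset.univ.erase i0).powerset, F (B.card + 1))
        = ∑ B ∈ (Finset.univ.erase i0).powerset, (fun k => F (k + 1)) B.card from rfl,
      sum_card_powerset (Finset.univ.erase i0) (fun k => F (k + 1))]
    have hcard : (Finset.univ.erase i0).card = n - 1 := by
      rw [Finset.card_erase_of_mem (Finset.mem_univ i0), Finset.card_univ, Fintype.card_fin]
    rw [hcard]
    have hIcc : Finset.Icc 1 n = Finset.Ico 1 (n + 1) := by rw [Finset.Ico_add_one_right_eq_Icc]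
    rw [hIcc, Finset.sum_Ico_eq_sum_range, Finset.mul_sum]
    have hrange : n - 1 + 1 = n := by omega
    rw [hrange]
    simp only [Nat.add_sub_cancel]
    refine Finset.sum_congr rfl fun j hj => ?_
    have h1 : 1 + j = j + 1 := by omega
    rw [h1, Nat.add_sub_cancel, hF]
    simp only [if_neg (Nat.succ_ne_zero j)]
    rw [Pr]
    have h2 : n - (j + 1) = n - 1 - j := by omega
    rw [h2]
    ring
  beta_reduce
  rw [hnum, hden]
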